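/- Let A ∈ ℝ^{p×p} and B ∈ ℝ^{q×q} be symmetric positive semidefinite with λ_min(A) ≥ λ_max(B). Let G1 ∈ ℝ^{p×m} with p ≥ m and G2 ∈ ℝ^{q×m}, and set γ1 := λ_min(G1ᵀ G1) and γ2 := λ_max(G2ᵀ G2). If γ1 < γ2, then ‖A − G1 G1ᵀ‖_F² + ‖B − G2 G2ᵀ‖_F² ≥ (1/2)(γ2 − γ1)². -/

import Mathlib

open Matrix

/-- Frobenius inner product of two real matrices. -/
noncomputable def finner {m n : Type*} [Fintype m] [Fintype n]
    (A B : Matrix m n ℝ) : ℝ := (Aᵀ * B).trace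

/-- Frobenius norm of a real matrix. -/
noncomputable def fnorm {m n : Type*} [Fintype m] [Fintype n]
    (A : Matrix m n ℝ) : ℝ := Real.sqrt (finner A A)

open scoped Classical in
/-- Square root of a positive semidefinite real matrix (junk value `0` otherwise). -/
noncomputable def psqrt {r : ℕ} (M : Matrix (Fin r) (Fin r) ℝ) : Matrix (Fin r) (Fin r) ℝ :=
  if h : M.PosSemidef then (h.1.eigenvectorUnitary : Matrix (Fin r) (Fin r) ℝ) *
    diagonal ((↑) ∘ Real.sqrt ∘ h.1.eigenvalues) *
    (star h.1.eigenvectorUnitary : Matrix (Fin r) (Fin r) ℝ) else 0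

open scoped Classical in
/-- Smallest eigenvalue of a symmetric real matrix (junk value `0` otherwise). -/
noncomputable def lammin {r : ℕ} (M : Matrix (Fin r) (Fin r) ℝ) : ℝ :=
  if h : M.IsHermitian then ⨅ i, h.eigenvalues i else 0

open scoped Classical in
/-- Largest eigenvalue of a symmetric real matrix (junk value `0` otherwise). -/
noncomputable def lammax {r : ℕ} (M : Matrix (Fin r) (Fin r) ℝ) : ℝ :=
  if h : M.IsHermitian then ⨆ i, h.eigenvalues i else 0

/-! ### Auxiliary lemmas -/

lemma finner_self_eq {a b : Type*} [Fintype a] [Fintype b] (M : Matrix a b ℝ) :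
    finner M M = ∑ ij : a × b, (M ij.1 ij.2) ^ 2 := by
  rw [Fintype.sum_prod_type]
  rw [Finset.sum_comm]
  simp [finner, Matrix.trace, Matrix.mul_apply, Matrix.diag, sq]

lemma finner_self_nonneg {a b : Type*} [Fintype a] [Fintype b] (M : Matrix a b ℝ) :
    0 ≤ finner M M := by
  rw [finner_self_eq]
  positivity

lemma fnorm_sq {a b : Type*} [Fintype a] [Fintype b] (M : Matrix a b ℝ) :
    fnorm M ^ 2 = finner M M :=
  Real.sq_sqrt (finner_self_nonneg M)

lemma dot_sq_le_fnorm_sq {n : ℕ} (M : Matrix (Fin n) (Fin n) ℝ) (v : Fin n → ℝ)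
    (hv : v ⬝ᵥ v = 1) : (v ⬝ᵥ (M *ᵥ v)) ^ 2 ≤ fnorm M ^ 2 := by
  rw [fnorm_sq, finner_self_eq]
  have hv2 : ∑ i, v i ^ 2 = 1 := by simpa [dotProduct, sq] using hv
  have h1 : v ⬝ᵥ (M *ᵥ v) = ∑ ij : Fin n × Fin n, M ij.1 ij.2 * (v ij.1 * v ij.2) := by
    rw [Fintype.sum_prod_type]
    simp only [dotProduct, mulVec, Finset.mul_sum]
    exact Finset.sum_congr rfl fun i _ => Finset.sum_congr rfl fun j _ => by ring
  have h2 : ∑ ij : Fin n × Fin n, (v ij.1 * v ij.2) ^ 2 = 1 := by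
    rw [Fintype.sum_prod_type]
    simp only [mul_pow, ← Finset.mul_sum, ← Finset.sum_mul]
    rw [hv2, one_mul]
  calc (v ⬝ᵥ (M *ᵥ v)) ^ 2
      = (∑ ij : Fin n × Fin n, M ij.1 ij.2 * (v ij.1 * v ij.2)) ^ 2 := by rw [h1]
    _ ≤ (∑ ij : Fin n × Fin n, (M ij.1 ij.2) ^ 2) *
        (∑ ij : Fin n × Fin n, (v ij.1 * v ij.2) ^ 2) :=
        Finset.sum_mul_sq_le_sq_mul_sq _ _ _
    _ = ∑ ij : Fin n × Fin n, (M ij.1 ij.2) ^ 2 := by rw [h2, mul_one]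

lemma dot_mulVec_eq_sum {n : ℕ} {M : Matrix (Fin n) (Fin n) ℝ} (hM : M.IsHermitian)
    (v : Fin n → ℝ) : ∃ w : Fin n → ℝ,
      v ⬝ᵥ (M *ᵥ v) = ∑ i, hM.eigenvalues i * (w i * w i) ∧ v ⬝ᵥ v = ∑ i, w i * w i := by
  classical
  set U : Matrix (Fin n) (Fin n) ℝ := (hM.eigenvectorUnitary : Matrix (Fin n) (Fin n) ℝ)
    with hU
  set w : Fin n → ℝ := star U *ᵥ v with hw
  have hvU : v ᵥ* U = w := by
    rw [hw, Matrix.star_eq_conjTranspose, conjTranspose_eq_transpose_of_trivial,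
      mulVec_transpose]
  refine ⟨w, ?_, ?_⟩
  · conv_lhs => rw [hM.spectral_theorem, Unitary.conjStarAlgAut_apply]
    rw [← hU, ← Matrix.mulVec_mulVec, dotProduct_mulVec, ← Matrix.vecMul_vecMul, hvU]
    simp only [vecMul_diagonal, dotProduct, Function.comp_apply, RCLike.ofReal_real_eq_id,
      id_eq]
    exact Finset.sum_congr rfl fun i _ => by ring
  · have hU1 : U * star U = 1 := Matrix.mem_unitaryGroup_iff.mp hM.eigenvectorUnitary.2
    calc v ⬝ᵥ v = v ⬝ᵥ ((U * star U) *ᵥ v) := by rw [hU1, Matrix.one_mulVec]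
      _ = (v ᵥ* U) ⬝ᵥ (star U *ᵥ v) := by rw [← Matrix.mulVec_mulVec, dotProduct_mulVec]
      _ = w ⬝ᵥ w := by rw [hvU]
      _ = ∑ i, w i * w i := rfl

lemma rayleigh_min {n : ℕ} {M : Matrix (Fin n) (Fin n) ℝ} (hM : M.IsHermitian)
    (v : Fin n → ℝ) : lammin M * (v ⬝ᵥ v) ≤ v ⬝ᵥ (M *ᵥ v) := by
  classical
  obtain ⟨w, h1, h2⟩ := dot_mulVec_eq_sum hM v
  rw [h1, h2, Finset.mul_sum]
  refine Finset.sum_le_sum fun i _ => ?_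
  have hle : lammin M ≤ hM.eigenvalues i := by
    rw [lammin, dif_pos hM]
    exact ciInf_le (Finite.bddBelow_range _) i
  exact mul_le_mul_of_nonneg_right hle (mul_self_nonneg _)

lemma rayleigh_max {n : ℕ} {M : Matrix (Fin n) (Fin n) ℝ} (hM : M.IsHermitian)
    (v : Fin n → ℝ) : v ⬝ᵥ (M *ᵥ v) ≤ lammax M * (v ⬝ᵥ v) := by
  classical
  obtain ⟨w, h1, h2⟩ := dot_mulVec_eq_sum hM v
  rw [h1, h2, Finset.mul_sum]
  refine Finset.sum_le_sum fun i _ => ?_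
  have hle : hM.eigenvalues i ≤ lammax M := by
    rw [lammax, dif_pos hM]
    exact le_ciSup (Finite.bddAbove_range _) i
  exact mul_le_mul_of_nonneg_right hle (mul_self_nonneg _)

lemma exists_unit_eigvec {n : ℕ} {M : Matrix (Fin n) (Fin n) ℝ} (hM : M.IsHermitian) (c : ℝ)
    (hc : ∃ i, hM.eigenvalues i = c) :
    ∃ w : Fin n → ℝ, w ⬝ᵥ w = 1 ∧ M *ᵥ w = c • w := by
  classical
  obtain ⟨i, hi⟩ := hc
  refine ⟨⇑(hM.eigenvectorBasis i), ?_, by rw [hM.mulVec_eigenvectorBasis, hi]⟩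
  have h := hM.eigenvectorBasis.orthonormal.1 i
  have h2 : (inner ℝ (hM.eigenvectorBasis i) (hM.eigenvectorBasis i) : ℝ) = 1 := by
    rw [real_inner_self_eq_norm_mul_norm, h, one_mul]
  simp only [PiLp.inner_apply, RCLike.inner_apply, starRingEnd_apply, star_trivial] at h2
  simpa [dotProduct, mul_comm] using h2

lemma exists_ker_vec {p m : ℕ} (hpm : m ≤ p) (G : Matrix (Fin p) (Fin m) ℝ)
    {w : Fin m → ℝ} (hw : w ≠ 0) (hGw : G *ᵥ w = 0) :
    ∃ z : Fin p → ℝ, z ≠ 0 ∧ Gᵀ *ᵥ z = 0 := by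
  classical
  by_contra hcon
  push_neg at hcon
  have hker : LinearMap.ker (Gᵀ.mulVecLin) = ⊥ := by
    rw [LinearMap.ker_eq_bot']
    intro z hz
    by_contra hz0
    exact hcon z hz0 hz
  have h1 : Gᵀ.rank = p := by
    have h := LinearMap.finrank_range_add_finrank_ker (Gᵀ.mulVecLin)
    rw [hker, finrank_bot, add_zero] at h
    simpa [Matrix.rank] using h
  have h2 : G.rank < m := by
    have h3 := LinearMap.finrank_range_add_finrank_ker (G.mulVecLin)
    have h4 : LinearMap.ker (G.mulVecLin) ≠ ⊥ := by
      rw [Submodule.ne_bot_iff]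
      exact ⟨w, by simpa using hGw, hw⟩
    have h5 : Module.finrank ℝ (LinearMap.ker (G.mulVecLin)) ≠ 0 := by
      rw [Ne, Submodule.finrank_eq_zero]
      exact h4
    have h6 : Module.finrank ℝ (Fin m → ℝ) = m := by simp
    rw [h6] at h3
    have : G.rank = Module.finrank ℝ (LinearMap.range G.mulVecLin) := rfl
    omega
  rw [Matrix.rank_transpose] at h1
  omega

lemma dot_GtG {a b : ℕ} (G : Matrix (Fin a) (Fin b) ℝ) (x : Fin b → ℝ) :
    x ⬝ᵥ ((Gᵀ * G) *ᵥ x) = (G *ᵥ x) ⬝ᵥ (G *ᵥ x) := by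
  rw [← Matrix.mulVec_mulVec, dotProduct_mulVec, vecMul_transpose]

lemma dot_GGt {a b : ℕ} (G : Matrix (Fin a) (Fin b) ℝ) (z : Fin a → ℝ) :
    z ⬝ᵥ ((G * Gᵀ) *ᵥ z) = (Gᵀ *ᵥ z) ⬝ᵥ (Gᵀ *ᵥ z) := by
  rw [← Matrix.mulVec_mulVec, dotProduct_mulVec, mulVec_transpose]

lemma dot_self_nonneg {n : ℕ} (v : Fin n → ℝ) : 0 ≤ v ⬝ᵥ v :=
  Finset.sum_nonneg fun i _ => mul_self_nonneg _

/-- normalize a vector with positive self-dot-product -/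
lemma exists_unit_scale {n : ℕ} (z : Fin n → ℝ) (hz : 0 < z ⬝ᵥ z) :
    ∃ c : ℝ, 0 < c ∧ (c • z) ⬝ᵥ (c • z) = 1 := by
  refine ⟨(Real.sqrt (z ⬝ᵥ z))⁻¹, by positivity, ?_⟩
  rw [smul_dotProduct, dotProduct_smul]
  have h : Real.sqrt (z ⬝ᵥ z) ^ 2 = z ⬝ᵥ z := Real.sq_sqrt hz.le
  have hs : (0:ℝ) < Real.sqrt (z ⬝ᵥ z) := Real.sqrt_pos.mpr hz
  simp only [smul_eq_mul]
  field_simp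
  rw [h]

/-- quantitative eigenvalue-matching lower bound, core of the paper's
appendix Lemma 15. -/
theorem stmt_15 {p q m : ℕ} (hpm : m ≤ p)
    (A : Matrix (Fin p) (Fin p) ℝ) (B : Matrix (Fin q) (Fin q) ℝ)
    (hA : A.PosSemidef) (hB : B.PosSemidef)
    (hAB : lammax B ≤ lammin A)
    (G1 : Matrix (Fin p) (Fin m) ℝ) (G2 : Matrix (Fin q) (Fin m) ℝ)
    (γ1 γ2 : ℝ) (hγ1 : γ1 = lammin (G1ᵀ * G1)) (hγ2 : γ2 = lammax (G2ᵀ * G2))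
    (hlt : γ1 < γ2) :
    1 / 2 * (γ2 - γ1) ^ 2 ≤ fnorm (A - G1 * G1ᵀ) ^ 2 + fnorm (B - G2 * G2ᵀ) ^ 2 := by
  classical
  have hN1 : (G1ᵀ * G1).PosSemidef := by
    have h := Matrix.posSemidef_conjTranspose_mul_self G1
    rwa [conjTranspose_eq_transpose_of_trivial] at h
  have hN2 : (G2ᵀ * G2).PosSemidef := by
    have h := Matrix.posSemidef_conjTranspose_mul_self G2
    rwa [conjTranspose_eq_transpose_of_trivial] at h
  -- m is positive
  rcases Nat.eq_zero_or_pos m with hm | hm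
  · exfalso
    subst hm
    have h1 : γ1 = 0 := by rw [hγ1, lammin, dif_pos hN1.1]; exact Real.iInf_of_isEmpty _
    have h2 : γ2 = 0 := by rw [hγ2, lammax, dif_pos hN2.1]; exact Real.iSup_of_isEmpty _
    rw [h1, h2] at hlt; exact lt_irrefl _ hlt
  have : Nonempty (Fin m) := ⟨⟨0, hm⟩⟩
  -- attained eigenvalues
  have hγ1attain : ∃ i, hN1.1.eigenvalues i = γ1 := by
    rw [hγ1, lammin, dif_pos hN1.1]; exact exists_eq_ciInf_of_finite
  have hγ2attain : ∃ i, hN2.1.eigenvalues i = γ2 := by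
    rw [hγ2, lammax, dif_pos hN2.1]; exact exists_eq_ciSup_of_finite
  have hγ1nn : 0 ≤ γ1 := by
    obtain ⟨i, hi⟩ := hγ1attain; rw [← hi]; exact hN1.eigenvalues_nonneg i
  have hγ2pos : 0 < γ2 := lt_of_le_of_lt hγ1nn hlt
  -- side B : unit vector u with u ⬝ᵥ (G2 G2ᵀ u) = γ2
  obtain ⟨w2, hw2unit, hw2eig⟩ := exists_unit_eigvec hN2.1 γ2 hγ2attain
  have hu0 : (G2 *ᵥ w2) ⬝ᵥ (G2 *ᵥ w2) = γ2 := by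
    rw [← dot_GtG, hw2eig, dotProduct_smul, hw2unit]; simp
  obtain ⟨c2, hc2pos, hc2unit⟩ := exists_unit_scale (G2 *ᵥ w2) (by rw [hu0]; exact hγ2pos)
  set u : Fin q → ℝ := c2 • (G2 *ᵥ w2) with hu
  have hueig : (G2 * G2ᵀ) *ᵥ u = γ2 • u := by
    rw [hu, mulVec_smul, ← Matrix.mulVec_mulVec, Matrix.mulVec_mulVec]
    have : (G2 * G2ᵀ) *ᵥ (G2 *ᵥ w2) = G2 *ᵥ ((G2ᵀ * G2) *ᵥ w2) := by
      rw [Matrix.mulVec_mulVec, Matrix.mulVec_mulVec, Matrix.mul_assoc]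
    rw [this, hw2eig, mulVec_smul, smul_comm]
  have hudot : u ⬝ᵥ ((G2 * G2ᵀ) *ᵥ u) = γ2 := by
    rw [hueig, dotProduct_smul, hc2unit]; simp
  -- side A : unit vector v with v ⬝ᵥ (G1 G1ᵀ v) ≤ γ1
  obtain ⟨w1, hw1unit, hw1eig⟩ := exists_unit_eigvec hN1.1 γ1 hγ1attain
  have hw1ne : w1 ≠ 0 := by
    intro h0
    rw [h0] at hw1unit
    simp [dotProduct] at hw1unit
  have hAx : ∃ v : Fin p → ℝ, v ⬝ᵥ v = 1 ∧ v ⬝ᵥ ((G1 * G1ᵀ) *ᵥ v) ≤ γ1 := by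
    by_cases h : G1 *ᵥ w1 = 0
    · have hγ10 : γ1 = 0 := by
        have h1 : γ1 • w1 = 0 := by
          rw [← hw1eig, ← Matrix.mulVec_mulVec, h, Matrix.mulVec_zero]
        rcases smul_eq_zero.mp h1 with h2 | h2
        · exact h2
        · exact absurd h2 hw1ne
      obtain ⟨z, hz0, hzker⟩ := exists_ker_vec hpm G1 hw1ne h
      have hzpos : 0 < z ⬝ᵥ z := by
        rcases (dot_self_nonneg z).lt_or_eq with h' | h'
        · exact h'
        · exact absurd (dotProduct_self_eq_zero.mp h'.symm) hz0
      obtain ⟨c, hcpos, hcunit⟩ := exists_unit_scale z hzpos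
      refine ⟨c • z, hcunit, ?_⟩
      rw [dot_GGt]
      have : G1ᵀ *ᵥ (c • z) = 0 := by rw [mulVec_smul, hzker, smul_zero]
      rw [this]
      simp [hγ10]
    · have hu1 : (G1 *ᵥ w1) ⬝ᵥ (G1 *ᵥ w1) = γ1 := by
        rw [← dot_GtG, hw1eig, dotProduct_smul, hw1unit]; simp
      have hγ1pos : 0 < γ1 := by
        rcases (dot_self_nonneg (G1 *ᵥ w1)).lt_or_eq with h' | h'
        · rwa [hu1] at h'
        · exact absurd (dotProduct_self_eq_zero.mp h'.symm) h
      obtain ⟨c1, hc1pos, hc1unit⟩ := exists_unit_scale (G1 *ᵥ w1) (by rw [hu1]; exact hγ1pos)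
      refine ⟨c1 • (G1 *ᵥ w1), hc1unit, ?_⟩
      have hveig : (G1 * G1ᵀ) *ᵥ (c1 • (G1 *ᵥ w1)) = γ1 • (c1 • (G1 *ᵥ w1)) := by
        rw [mulVec_smul]
        have : (G1 * G1ᵀ) *ᵥ (G1 *ᵥ w1) = G1 *ᵥ ((G1ᵀ * G1) *ᵥ w1) := by
          rw [Matrix.mulVec_mulVec, Matrix.mulVec_mulVec, Matrix.mul_assoc]
        rw [this, hw1eig, mulVec_smul, smul_comm]
      rw [hveig, dotProduct_smul, hc1unit]
      simp
  obtain ⟨v, hvunit, hvle⟩ := hAx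
  -- Rayleigh bounds
  have hx : lammin A - γ1 ≤ v ⬝ᵥ ((A - G1 * G1ᵀ) *ᵥ v) := by
    rw [Matrix.sub_mulVec, dotProduct_sub]
    have h1 : lammin A ≤ v ⬝ᵥ (A *ᵥ v) := by
      have h := rayleigh_min hA.1 v
      rwa [hvunit, mul_one] at h
    linarith
  have hy : u ⬝ᵥ ((B - G2 * G2ᵀ) *ᵥ u) ≤ lammax B - γ2 := by
    rw [Matrix.sub_mulVec, dotProduct_sub]
    have h1 : u ⬝ᵥ (B *ᵥ u) ≤ lammax B := by
      have h := rayleigh_max hB.1 u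
      rwa [hc2unit, mul_one] at h
    rw [hudot]
    linarith
  have hx2 := dot_sq_le_fnorm_sq (A - G1 * G1ᵀ) v hvunit
  have hy2 := dot_sq_le_fnorm_sq (B - G2 * G2ᵀ) u hc2unit
  set x := v ⬝ᵥ ((A - G1 * G1ᵀ) *ᵥ v) with hxdef
  set y := u ⬝ᵥ ((B - G2 * G2ᵀ) *ᵥ u) with hydef
  have hds : γ2 - γ1 ≤ x - y := by linarith
  nlinarith [sq_nonneg (x + y),
    mul_nonneg (sub_nonneg.mpr hds) (show (0:ℝ) ≤ x - y + (γ2 - γ1) by linarith),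
    hx2, hy2]
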